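/- arXiv:1603.05243 — 6 statements merged into one kernel-verified Lean document; each statement's English description precedes it below -/
import Mathlib

section
/- For every n ≥ 2, every simple graph G on at least 2^(2n-3) vertices contains either a clique of size n or an independent set of size n; i.e., the Ramsey number R(n) satisfies R(n) ≤ 2^(2n-3). -/
open Finset

lemma ramsey_key (k : ℕ) : ∀ s t : ℕ, s + t = k →
    ∀ {V : Type} (G : SimpleGraph V) (A : Finset V),
    Nat.choose (s + t) s ≤ A.card →
    ∃ B ⊆ A, (B.card = s + 1 ∧ G.IsClique (B : Set V)) ∨
             (B.card = t + 1 ∧ Gᶜ.IsClique (B : Set V)) := by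
  induction k using Nat.strong_induction_on with
  | _ k ih =>
  intro s t hst V G A hA
  classical
  obtain _ | s' := s
  · have hpos : 0 < A.card := lt_of_lt_of_le (Nat.choose_pos (Nat.zero_le _)) hA
    obtain ⟨a, ha⟩ := Finset.card_pos.mp hpos
    exact ⟨{a}, by simpa using ha, Or.inl ⟨by simp, by simp⟩⟩
  obtain _ | t' := t
  · have hpos : 0 < A.card := lt_of_lt_of_le (Nat.choose_pos (by omega)) hA
    obtain ⟨a, ha⟩ := Finset.card_pos.mp hpos
    exact ⟨{a}, by simpa using ha, Or.inr ⟨by simp, by simp⟩⟩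
  -- main inductive case
  have hC : (s' + 1 + (t' + 1)).choose (s' + 1)
      = (s' + (t' + 1)).choose s' + ((s' + 1) + t').choose (s' + 1) := by
    rw [show s' + 1 + (t' + 1) = (s' + (t' + 1)) + 1 from by omega,
      Nat.choose_succ_succ, show s' + (t' + 1) = (s' + 1) + t' from by omega]
  have hpos : 0 < A.card := lt_of_lt_of_le (Nat.choose_pos (by omega)) hA
  obtain ⟨a, ha⟩ := Finset.card_pos.mp hpos
  set Nb := (A.erase a).filter (fun b => G.Adj a b) with hNb
  set Mb := (A.erase a).filter (fun b => ¬ G.Adj a b) with hMb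
  have hsplit : Nb.card + Mb.card = (A.erase a).card :=
    Finset.card_filter_add_card_filter_not _
  have hcardE : (A.erase a).card = A.card - 1 := Finset.card_erase_of_mem ha
  have hNsub : Nb ⊆ A := (Finset.filter_subset _ _).trans (Finset.erase_subset _ _)
  have hMsub : Mb ⊆ A := (Finset.filter_subset _ _).trans (Finset.erase_subset _ _)
  have hcases : (s' + (t' + 1)).choose s' ≤ Nb.card ∨
      ((s' + 1) + t').choose (s' + 1) ≤ Mb.card := by omega
  rcases hcases with hc | hc
  · obtain ⟨B, hBsub, hB⟩ := ih (s' + (t' + 1)) (by omega) s' (t' + 1) rfl G Nb hc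
    rcases hB with ⟨hcard, hclique⟩ | ⟨hcard, hind⟩
    · refine ⟨insert a B, ?_, Or.inl ⟨?_, ?_⟩⟩
      · exact Finset.insert_subset ha (hBsub.trans hNsub)
      · have haB : a ∉ B := fun h =>
          Finset.notMem_erase a A (Finset.mem_of_mem_filter a (hBsub h))
        rw [Finset.card_insert_of_notMem haB, hcard]
      · rw [Finset.coe_insert]
        refine hclique.insert fun b hb _ => ?_
        exact (Finset.mem_filter.mp (hBsub hb)).2
    · exact ⟨B, hBsub.trans hNsub, Or.inr ⟨hcard, hind⟩⟩
  · obtain ⟨B, hBsub, hB⟩ := ih ((s' + 1) + t') (by omega) (s' + 1) t' rfl G Mb hc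
    rcases hB with ⟨hcard, hclique⟩ | ⟨hcard, hind⟩
    · exact ⟨B, hBsub.trans hMsub, Or.inl ⟨hcard, hclique⟩⟩
    · refine ⟨insert a B, ?_, Or.inr ⟨?_, ?_⟩⟩
      · exact Finset.insert_subset ha (hBsub.trans hMsub)
      · have haB : a ∉ B := fun h =>
          Finset.notMem_erase a A (Finset.mem_of_mem_filter a (hBsub h))
        rw [Finset.card_insert_of_notMem haB, hcard]
      · rw [Finset.coe_insert]
        refine hind.insert fun b hb _ => ?_
        have hbM := Finset.mem_filter.mp (hBsub hb)
        have hba : b ≠ a := Finset.ne_of_mem_erase hbM.1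
        exact ⟨hba.symm, hbM.2⟩

lemma central_le (m : ℕ) (hm : 1 ≤ m) : Nat.choose (2 * m) m ≤ 2 ^ (2 * m - 1) := by
  obtain ⟨m', rfl⟩ := Nat.exists_eq_add_of_le hm
  have h1 : (2 * (1 + m')).choose (1 + m')
      = (2 * m' + 1).choose m' + (2 * m' + 1).choose (m' + 1) := by
    rw [show 2 * (1 + m') = (2 * m' + 1) + 1 from by omega,
      show 1 + m' = m' + 1 from by omega, Nat.choose_succ_succ]
  rw [h1, Nat.choose_symm_half]
  have h2 := Nat.choose_middle_le_pow m'
  have h4 : (4 : ℕ) ^ m' = 2 ^ (2 * m') := by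
    rw [show (4 : ℕ) = 2 ^ 2 from rfl, ← pow_mul]
  have : 2 ^ (2 * (1 + m') - 1) = 2 ^ (2 * m') + 2 ^ (2 * m') := by
    rw [show 2 * (1 + m') - 1 = 2 * m' + 1 from by omega, pow_succ]
    ring
  omega

/-- Ramsey bound `R(n) ≤ 2^(2n-3)`: every graph on at least `2^(2n-3)` vertices
(for `n ≥ 2`) contains a clique of size `n` or an independent set of size `n`. -/
theorem ramsey_le_two_pow (n : ℕ) (hn : 2 ≤ n) (N : ℕ) (hN : 2 ^ (2 * n - 3) ≤ N)
    (G : SimpleGraph (Fin N)) :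
    ∃ s : Finset (Fin N), s.card = n ∧ (G.IsClique (s : Set (Fin N)) ∨ Gᶜ.IsClique (s : Set (Fin N))) := by
  have hchoose : Nat.choose ((n - 1) + (n - 1)) (n - 1) ≤ (Finset.univ : Finset (Fin N)).card := by
    have h1 : Nat.choose (2 * (n - 1)) (n - 1) ≤ 2 ^ (2 * (n - 1) - 1) :=
      central_le (n - 1) (by omega)
    have h2 : 2 * (n - 1) - 1 = 2 * n - 3 := by omega
    have h3 : (n - 1) + (n - 1) = 2 * (n - 1) := by omega
    rw [h3]
    calc Nat.choose (2 * (n - 1)) (n - 1) ≤ 2 ^ (2 * n - 3) := h2 ▸ h1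
      _ ≤ N := hN
      _ = (Finset.univ : Finset (Fin N)).card := by simp
  obtain ⟨B, _, hB⟩ := ramsey_key ((n - 1) + (n - 1)) (n - 1) (n - 1) rfl G Finset.univ hchoose
  have hn1 : n - 1 + 1 = n := by omega
  rcases hB with ⟨hcard, h⟩ | ⟨hcard, h⟩
  · exact ⟨B, by omega, Or.inl h⟩
  · exact ⟨B, by omega, Or.inr h⟩
end

section
/- Every simple graph G on 2^(n-2) vertices (for n ≥ 2) contains a clique A and an independent set B (not necessarily disjoint) with |A| + |B| ≥ n. -/
open Classical in
lemma Rprime_aux (n : ℕ) : ∀ (V : Type) [DecidableEq V] (G : SimpleGraph V) (S : Finset V),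
    2 ^ n ≤ S.card → ∃ A B : Finset V, A ⊆ S ∧ B ⊆ S ∧
      G.IsClique (A : Set V) ∧ Gᶜ.IsClique (B : Set V) ∧ n + 2 ≤ A.card + B.card := by
  induction n with
  | zero =>
    intro V _ G S hS
    obtain ⟨v, hv⟩ := Finset.card_pos.mp (by omega : 0 < S.card)
    refine ⟨{v}, {v}, by simpa using hv, by simpa using hv, ?_, ?_, by simp⟩
    · simp [SimpleGraph.isClique_singleton]
    · simp [SimpleGraph.isClique_singleton]
  | succ n ih =>
    intro V _ G S hS
    have hpos : 0 < S.card := lt_of_lt_of_le (pow_pos (by norm_num) _) hS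
    obtain ⟨v, hv⟩ := Finset.card_pos.mp hpos
    set T := S.erase v with hT
    have hTcard : T.card = S.card - 1 := Finset.card_erase_of_mem hv
    set N1 := T.filter (fun u => G.Adj v u) with hN1
    set N2 := T.filter (fun u => ¬ G.Adj v u) with hN2
    have hsum : N1.card + N2.card = T.card :=
      Finset.card_filter_add_card_filter_not _
    have hcases : 2 ^ n ≤ N1.card ∨ 2 ^ n ≤ N2.card := by
      rw [pow_succ] at hS; omega
    rcases hcases with h1 | h2
    · obtain ⟨A, B, hAS, hBS, hA, hB, hcard⟩ := ih V G N1 h1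
      have hAT : A ⊆ T := hAS.trans (Finset.filter_subset _ _)
      have hvA : v ∉ A := fun h => Finset.notMem_erase v S (hAT h)
      refine ⟨insert v A, B, ?_, ?_, ?_, hB, ?_⟩
      · exact Finset.insert_subset hv (hAT.trans (Finset.erase_subset _ _))
      · exact hBS.trans ((Finset.filter_subset _ _).trans (Finset.erase_subset _ _))
      · rw [Finset.coe_insert]
        exact hA.insert (fun b hb _ => (Finset.mem_filter.mp (hAS hb)).2)
      · rw [Finset.card_insert_of_notMem hvA]; omega
    · obtain ⟨A, B, hAS, hBS, hA, hB, hcard⟩ := ih V G N2 h2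
      have hBT : B ⊆ T := hBS.trans (Finset.filter_subset _ _)
      have hvB : v ∉ B := fun h => Finset.notMem_erase v S (hBT h)
      refine ⟨A, insert v B, ?_, ?_, hA, ?_, ?_⟩
      · exact hAS.trans ((Finset.filter_subset _ _).trans (Finset.erase_subset _ _))
      · exact Finset.insert_subset hv (hBT.trans (Finset.erase_subset _ _))
      · rw [Finset.coe_insert]
        refine hB.insert (fun b hb hne => ?_)
        have hmem := Finset.mem_filter.mp (hBS hb)
        exact (SimpleGraph.compl_adj G v b).mpr ⟨hne, fun h => hmem.2 h⟩
      · rw [Finset.card_insert_of_notMem hvB]; omega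

/-- `R'(n) ≤ 2^(n-2)`: every graph on `2^(n-2)` vertices (for `n ≥ 2`) contains a
clique `A` and an independent set `B` (not necessarily disjoint) with `|A| + |B| ≥ n`. -/
theorem Rprime_le_two_pow (n : ℕ) (hn : 2 ≤ n) (G : SimpleGraph (Fin (2 ^ (n - 2)))) :
    ∃ A B : Finset (Fin (2 ^ (n - 2))), G.IsClique (A : Set (Fin (2 ^ (n - 2)))) ∧
      Gᶜ.IsClique (B : Set (Fin (2 ^ (n - 2)))) ∧ n ≤ A.card + B.card := by
  obtain ⟨A, B, _, _, hA, hB, hcard⟩ :=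
    Rprime_aux (n - 2) (Fin (2 ^ (n - 2))) G Finset.univ (by simp)
  exact ⟨A, B, hA, hB, by omega⟩
end

section
/- R'(5) = 6: every simple graph on 6 vertices contains a clique A and an independent set B with |A| + |B| ≥ 5, and the 5-cycle contains no such pair with |A| + |B| ≥ 5. -/
/-- The 5-cycle. -/
def cycleFive : SimpleGraph (Fin 5) := SimpleGraph.fromRel (fun a b => b = a + 1)

open Finset SimpleGraph

-- key lemma: a vertex with 3 neighbors gives a triangle in H or Hᶜ
lemma key {V : Type*} [DecidableEq V] (H : SimpleGraph V) (v : V) (s : Finset V)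
    (hcard : 3 ≤ s.card) (hadj : ∀ w ∈ s, H.Adj v w) :
    (∃ t : Finset V, H.IsNClique 3 t) ∨ (∃ t : Finset V, Hᶜ.IsNClique 3 t) := by
  classical
  obtain ⟨t, hts, ht3⟩ := s.exists_subset_card_eq hcard
  obtain ⟨a, b, c, hab, hac, hbc, rfl⟩ := Finset.card_eq_three.1 ht3
  have ha := hadj a (hts (by simp))
  have hb := hadj b (hts (by simp))
  have hc := hadj c (hts (by simp))
  by_cases h1 : H.Adj a b
  · exact Or.inl ⟨{v, a, b}, is3Clique_triple_iff.2 ⟨ha, hb, h1⟩⟩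
  by_cases h2 : H.Adj a c
  · exact Or.inl ⟨{v, a, c}, is3Clique_triple_iff.2 ⟨ha, hc, h2⟩⟩
  by_cases h3 : H.Adj b c
  · exact Or.inl ⟨{v, b, c}, is3Clique_triple_iff.2 ⟨hb, hc, h3⟩⟩
  · exact Or.inr ⟨{a, b, c}, is3Clique_triple_iff.2
      ⟨⟨hab, h1⟩, ⟨hac, h2⟩, ⟨hbc, h3⟩⟩⟩

lemma ramsey33 (G : SimpleGraph (Fin 6)) :
    (∃ t : Finset (Fin 6), G.IsNClique 3 t) ∨ (∃ t : Finset (Fin 6), Gᶜ.IsNClique 3 t) := by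
  classical
  set s : Finset (Fin 6) := univ.filter (G.Adj 0) with hs
  set s' : Finset (Fin 6) := (univ.erase 0).filter (fun v => ¬ G.Adj 0 v) with hs'
  have hsub : s ⊆ univ.erase 0 := by
    intro v hv
    simp only [hs, mem_filter] at hv
    simp [Finset.mem_erase, (G.ne_of_adj hv.2).symm]
  have hcards : s.card + s'.card = 5 := by
    have := Finset.card_filter_add_card_filter_not
      (s := univ.erase 0) (p := fun v => G.Adj 0 v)
    have hfe : (univ.erase 0).filter (fun v => G.Adj 0 v) = s := by
      apply Finset.Subset.antisymm
      · intro v hv; simp only [mem_filter, mem_erase] at hv; simp [hs, hv.2]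
      · intro v hv; simp only [hs, mem_filter] at hv
        simp [mem_filter, Finset.mem_erase, hv.2, (G.ne_of_adj hv.2).symm]
    rw [hfe] at this
    rw [this]
    simp [Finset.card_erase_of_mem]
  rcases le_or_gt 3 s.card with h | h
  · exact key G 0 s h (fun w hw => by simpa [hs] using (mem_filter.1 hw).2)
  · have h' : 3 ≤ s'.card := by omega
    have := key Gᶜ 0 s' h' (fun w hw => by
      simp only [hs', mem_filter, mem_erase] at hw
      exact ⟨Ne.symm hw.1.1, hw.2⟩)
    rw [compl_compl] at this
    exact this.symm

instance : DecidableRel cycleFive.Adj := fun a b =>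
  decidable_of_iff _ (SimpleGraph.fromRel_adj _ a b).symm

lemma noTriangle : ∀ a b c : Fin 5,
    ¬(cycleFive.Adj a b ∧ cycleFive.Adj a c ∧ cycleFive.Adj b c) := by decide

lemma noIndep : ∀ a b c : Fin 5,
    ¬(cycleFiveᶜ.Adj a b ∧ cycleFiveᶜ.Adj a c ∧ cycleFiveᶜ.Adj b c) := by decide

/-- `R'(5) = 6`: every graph on 6 vertices has a clique `A` and an independent set `B`
with `|A| + |B| ≥ 5`, and the 5-cycle has no such pair. -/
theorem Rprime_five_eq_six :
    (∀ G : SimpleGraph (Fin 6), ∃ A B : Finset (Fin 6),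
      G.IsClique (A : Set (Fin 6)) ∧ Gᶜ.IsClique (B : Set (Fin 6)) ∧ 5 ≤ A.card + B.card) ∧
    (¬ ∃ A B : Finset (Fin 5),
      cycleFive.IsClique (A : Set (Fin 5)) ∧ cycleFiveᶜ.IsClique (B : Set (Fin 5)) ∧
      5 ≤ A.card + B.card) := by
  constructor
  · intro G
    by_cases hE : ∃ a b, G.Adj a b
    · by_cases hN : ∃ a b, Gᶜ.Adj a b
      · obtain ⟨a, b, hab⟩ := hE
        obtain ⟨c, d, hcd⟩ := hN
        rcases ramsey33 G with ⟨t, ht⟩ | ⟨t, ht⟩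
        · refine ⟨t, {c, d}, ht.1, ?_, ?_⟩
          · rw [Finset.coe_pair]
            exact isClique_pair.2 (fun _ => hcd)
          · rw [ht.2, Finset.card_pair hcd.ne]
        · refine ⟨{a, b}, t, ?_, ht.1, ?_⟩
          · rw [Finset.coe_pair]
            exact isClique_pair.2 (fun _ => hab)
          · rw [ht.2, Finset.card_pair hab.ne]
      · push_neg at hN
        refine ⟨Finset.univ, {0}, ?_, by simp, by simp⟩
        intro x _ y _ hxy
        by_contra hadj
        exact hN x y ⟨hxy, hadj⟩
    · push_neg at hE
      refine ⟨{0}, Finset.univ, by simp, ?_, by simp⟩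
      intro x _ y _ hxy
      exact ⟨hxy, hE x y⟩
  · rintro ⟨A, B, hA, hB, hcard⟩
    have hA2 : A.card ≤ 2 := by
      by_contra h
      push_neg at h
      obtain ⟨t, hts, ht3⟩ := A.exists_subset_card_eq h
      obtain ⟨a, b, c, hab, hac, hbc, rfl⟩ := Finset.card_eq_three.1 ht3
      have h1 := hA (hts (by simp : a ∈ ({a,b,c} : Finset (Fin 5)))) (hts (by simp)) hab
      have h2 := hA (hts (by simp : a ∈ ({a,b,c} : Finset (Fin 5)))) (hts (by simp)) hac
      have h3 := hA (hts (by simp : b ∈ ({a,b,c} : Finset (Fin 5)))) (hts (by simp)) hbc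
      exact noTriangle a b c ⟨h1, h2, h3⟩
    have hB2 : B.card ≤ 2 := by
      by_contra h
      push_neg at h
      obtain ⟨t, hts, ht3⟩ := B.exists_subset_card_eq h
      obtain ⟨a, b, c, hab, hac, hbc, rfl⟩ := Finset.card_eq_three.1 ht3
      have h1 := hB (hts (by simp : a ∈ ({a,b,c} : Finset (Fin 5)))) (hts (by simp)) hab
      have h2 := hB (hts (by simp : a ∈ ({a,b,c} : Finset (Fin 5)))) (hts (by simp)) hac
      have h3 := hB (hts (by simp : b ∈ ({a,b,c} : Finset (Fin 5)))) (hts (by simp)) hbc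
      exact noIndep a b c ⟨h1, h2, h3⟩
    omega
end

section
/- For m, n ≥ 2, R_m(n) ≤ 1 + (m^(mn-2m+1) - 1)/(m-1): every m-colouring of the edges of a complete graph on 1 + (m^(mn-2m+1)-1)/(m-1) vertices contains a monochromatic clique of size n. -/
/-- `A` spans a complete subgraph all of whose edges have colour `i` under the
edge-colouring `c` of the complete graph. -/
def MonoClique {V : Type*} {m : ℕ} (c : Sym2 V → Fin m) (i : Fin m) (A : Finset V) : Prop :=
  ∀ a ∈ A, ∀ b ∈ A, a ≠ b → c s(a, b) = i

private def geom (m : ℕ) : ℕ → ℕ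
  | 0 => 0
  | k + 1 => 1 + m * geom m k

lemma geom_eq (m : ℕ) (hm : 2 ≤ m) (k : ℕ) :
    (m ^ k - 1) / (m - 1) = geom m k := by
  have h : (m - 1) * geom m k = m ^ k - 1 := by
    induction k with
    | zero => simp [geom]
    | succ k ih =>
      have h1 : 1 ≤ m ^ k := Nat.one_le_pow _ _ (by omega)
      have h2 : m * ((m - 1) * geom m k) = m * (m ^ k - 1) := by rw [ih]
      have h3 : m * (m ^ k - 1) = m ^ (k + 1) - m := by
        rw [Nat.mul_sub, mul_one, pow_succ, mul_comm]
      have h4 : m ≤ m ^ (k + 1) := Nat.le_self_pow (by omega) m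
      have h5 : (m - 1) * geom m (k + 1) = (m - 1) + m * ((m - 1) * geom m k) := by
        simp only [geom]; ring
      omega
  exact Nat.div_eq_of_eq_mul_left (by omega) (by rw [mul_comm]; exact h.symm)

lemma key_s8 {N m : ℕ} (hm : 1 ≤ m) (c : Sym2 (Fin N) → Fin m) (k : ℕ) :
    ∀ S : Finset (Fin N), 1 + geom m k ≤ S.card →
    ∃ (l : List (Fin N)) (col : Fin N → Fin m),
      l.length = k + 1 ∧ l.Nodup ∧ (∀ x ∈ l, x ∈ S) ∧
      l.Pairwise (fun a b => c s(a, b) = col a) := by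
  induction k with
  | zero =>
    intro S hS
    have hg : geom m 0 = 0 := rfl
    have hS' : S.Nonempty := Finset.card_pos.mp (by omega)
    obtain ⟨v, hv⟩ := hS'
    exact ⟨[v], fun _ => ⟨0, hm⟩, rfl, by simp, by simpa using hv, by simp⟩
  | succ k ih =>
    intro S hS
    have hS' : S.Nonempty := Finset.card_pos.mp (by omega)
    obtain ⟨v, hv⟩ := hS'
    have hcard : 1 + m * geom m k ≤ (S.erase v).card := by
      rw [Finset.card_erase_of_mem hv]
      simp only [geom] at hS
      omega
    have hfib : ∃ i : Fin m, 1 + geom m k ≤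
        ((S.erase v).filter (fun w => c s(v, w) = i)).card := by
      by_contra hcon
      push_neg at hcon
      have hsum : ∑ i : Fin m, ((S.erase v).filter (fun w => c s(v, w) = i)).card
          = (S.erase v).card :=
        (Finset.card_eq_sum_card_fiberwise (fun x _ => Finset.mem_univ _)).symm
      have hle : (S.erase v).card ≤ m * geom m k := by
        rw [← hsum]
        calc ∑ i : Fin m, ((S.erase v).filter (fun w => c s(v, w) = i)).card
            ≤ ∑ _i : Fin m, geom m k :=
              Finset.sum_le_sum (fun i _ => by have := hcon i; omega)
          _ = m * geom m k := by simp [mul_comm]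
      omega
    obtain ⟨i, hi⟩ := hfib
    obtain ⟨l, col, hlen, hnd, hmem, hpw⟩ := ih _ hi
    have hmemT : ∀ x ∈ l, x ∈ S.erase v ∧ c s(v, x) = i := by
      intro x hx
      have := hmem x hx
      simpa using Finset.mem_filter.mp this
    have hvl : v ∉ l := fun hvl => (Finset.mem_erase.mp (hmemT v hvl).1).1 rfl
    refine ⟨v :: l, Function.update col v i, by simp [hlen], by simp [hnd, hvl],
      ?_, ?_⟩
    · intro x hx
      rcases List.mem_cons.mp hx with h | h
      · exact h ▸ hv
      · exact Finset.mem_of_mem_erase (hmemT x h).1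
    · rw [List.pairwise_cons]
      constructor
      · intro a ha
        rw [Function.update_self]
        exact (hmemT a ha).2
      · refine hpw.imp_of_mem ?_
        intro a b ha hb h
        have hav : a ≠ v := fun h' => hvl (h' ▸ ha)
        rw [Function.update_of_ne hav]
        exact h

/-- Theorem: for `m, n ≥ 2`, every `m`-colouring of the edges of a complete graph on at
least `1 + (m^(mn-2m+1) - 1)/(m-1)` vertices contains a monochromatic clique of size `n`. -/
theorem multicolour_ramsey_bound (m n : ℕ) (hm : 2 ≤ m) (hn : 2 ≤ n) (N : ℕ)
    (hN : 1 + (m ^ (m * n - 2 * m + 1) - 1) / (m - 1) ≤ N) (c : Sym2 (Fin N) → Fin m) :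
    ∃ (i : Fin m) (A : Finset (Fin N)), A.card = n ∧ MonoClique c i A := by
  set t := m * n - 2 * m + 1 with ht
  have htfact : t = m * (n - 2) + 1 := by
    have : m * n - 2 * m = m * (n - 2) := by
      rw [Nat.mul_sub]; ring_nf
    omega
  rw [geom_eq m hm t] at hN
  have hNcard : 1 + geom m t ≤ (Finset.univ : Finset (Fin N)).card := by
    simpa using hN
  obtain ⟨l, col, hlen, hnd, -, hpw⟩ := key_s8 (by omega) c t Finset.univ hNcard
  have hlne : l ≠ [] := by
    intro h; rw [h] at hlen; simp at hlen
  set v := l.getLast hlne with hv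
  set front := l.dropLast with hfront
  have hsplit : front ++ [v] = l := List.dropLast_append_getLast hlne
  have hflen : front.length = t := by
    have h1 : front.length = l.length - 1 := by
      rw [hfront, List.length_dropLast]
    omega
  rw [← hsplit] at hpw hnd
  rw [List.pairwise_append] at hpw
  obtain ⟨hpwf, -, hlast⟩ := hpw
  have hvf : v ∉ front := by
    rw [List.nodup_append'] at hnd
    intro hvfr
    exact hnd.2.2 hvfr (by simp)
  have hndf : front.Nodup := (List.nodup_append'.mp hnd).1
  set F := front.toFinset with hF
  have hFcard : F.card = t := by
    rw [hF, List.toFinset_card_of_nodup hndf, hflen]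
  have hfib : ∃ i : Fin m, n - 1 ≤ (F.filter (fun a => col a = i)).card := by
    by_contra hcon
    push_neg at hcon
    have hsum : ∑ i : Fin m, (F.filter (fun a => col a = i)).card = F.card :=
      (Finset.card_eq_sum_card_fiberwise (fun x _ => Finset.mem_univ _)).symm
    have hle : F.card ≤ m * (n - 2) := by
      rw [← hsum]
      calc ∑ i : Fin m, (F.filter (fun a => col a = i)).card
          ≤ ∑ _i : Fin m, (n - 2) :=
            Finset.sum_le_sum (fun i _ => by have := hcon i; omega)
        _ = m * (n - 2) := by simp [mul_comm]
    omega
  obtain ⟨i, hi⟩ := hfib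
  obtain ⟨A', hA'sub, hA'card⟩ := Finset.exists_subset_card_eq hi
  have hA'i : ∀ a ∈ A', a ∈ front ∧ col a = i := by
    intro a ha
    have := Finset.mem_filter.mp (hA'sub ha)
    exact ⟨List.mem_toFinset.mp this.1, this.2⟩
  have hvA' : v ∉ A' := fun h => hvf (hA'i v h).1
  refine ⟨i, insert v A', ?_, ?_⟩
  · rw [Finset.card_insert_of_notMem hvA', hA'card]; omega
  · have edge : ∀ a ∈ A', c s(a, v) = i := by
      intro a ha
      obtain ⟨haf, hci⟩ := hA'i a ha
      have := hlast a haf v (by simp)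
      rw [this, hci]
    have pairs : ∀ a ∈ A', ∀ b ∈ A', a ≠ b → c s(a, b) = i := by
      have hQ : front.Pairwise (fun a b =>
          (a ∈ A' → b ∈ A' → c s(a, b) = i) ∧ (a ∈ A' → b ∈ A' → c s(b, a) = i)) := by
        refine hpwf.imp_of_mem ?_
        intro a b ha hb h
        refine ⟨fun haA _ => ?_, fun haA _ => ?_⟩
        · rw [h, (hA'i a haA).2]
        · rw [Sym2.eq_swap, h, (hA'i a haA).2]
      have hsym : Symmetric (fun a b : Fin N =>
          (a ∈ A' → b ∈ A' → c s(a, b) = i) ∧ (a ∈ A' → b ∈ A' → c s(b, a) = i)) :=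
        fun a b h => ⟨fun hb ha => h.2 ha hb, fun hb ha => h.1 ha hb⟩
      haveI : Std.Symm (fun a b : Fin N =>
          (a ∈ A' → b ∈ A' → c s(a, b) = i) ∧ (a ∈ A' → b ∈ A' → c s(b, a) = i)) :=
        ⟨fun a b h => hsym h⟩
      have hall := hQ.forall
      intro a ha b hb hab
      exact (hall (hA'i a ha).1 (hA'i b hb).1 hab).1 ha hb
    intro a ha b hb hab
    rcases Finset.mem_insert.mp ha with rfl | ha'
    · rcases Finset.mem_insert.mp hb with rfl | hb'
      · exact absurd rfl hab
      · rw [Sym2.eq_swap]; exact edge b hb'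
    · rcases Finset.mem_insert.mp hb with rfl | hb'
      · exact edge a ha'
      · exact pairs a ha' b hb' hab
end

section
/- R'_m(n+1) ≤ 2 + m·(R'_m(n) - 1): if every m-edge-coloured complete graph on N vertices contains monochromatic cliques A_1,...,A_m of the m colours with total size ≥ n, then every m-edge-coloured complete graph on 2 + m(N-1) vertices contains such cliques with total size ≥ n+1. -/
/-- `R'_m(n+1) ≤ 2 + m(R'_m(n) - 1)`: if every `m`-edge-coloured complete graph on `N`
vertices contains monochromatic cliques of the `m` colours with total size at least `n`,
then every `m`-edge-coloured complete graph on `2 + m(N-1)` vertices contains such cliques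
with total size at least `n + 1`. -/
theorem Rprime_multicolour_step (m n N : ℕ)
    (h : ∀ c : Sym2 (Fin N) → Fin m, ∃ A : Fin m → Finset (Fin N),
      (∀ i, MonoClique c i (A i)) ∧ n ≤ ∑ i, (A i).card) :
    ∀ c : Sym2 (Fin (2 + m * (N - 1))) → Fin m, ∃ A : Fin m → Finset (Fin (2 + m * (N - 1))),
      (∀ i, MonoClique c i (A i)) ∧ n + 1 ≤ ∑ i, (A i).card := by
  intro c
  rcases Nat.eq_zero_or_pos m with hm | hm
  · subst hm
    exact (c s(⟨0, by omega⟩, ⟨0, by omega⟩)).elim0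
  have hV : 0 < 2 + m * (N - 1) := by omega
  set v : Fin (2 + m * (N - 1)) := ⟨0, hV⟩ with hv
  set s : Finset (Fin (2 + m * (N - 1))) := Finset.univ.erase v with hs
  have hscard : s.card = 1 + m * (N - 1) := by
    rw [hs, Finset.card_erase_of_mem (Finset.mem_univ v), Finset.card_univ, Fintype.card_fin]
    omega
  set g : Fin (2 + m * (N - 1)) → Fin m := fun u => c s(v, u) with hg
  obtain ⟨j, -, hj⟩ :=
    Finset.exists_lt_card_fiber_of_mul_lt_card_of_maps_to
      (f := g) (s := s) (t := Finset.univ) (n := N - 1)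
      (fun a _ => Finset.mem_univ _)
      (by rw [hscard, Finset.card_univ, Fintype.card_fin]; omega)
  set T : Finset (Fin (2 + m * (N - 1))) := {x ∈ s | g x = j} with hT
  have hNT : N ≤ T.card := by omega
  obtain ⟨T', hsub, hcard⟩ := Finset.exists_subset_card_eq hNT
  set e : T' ≃ Fin N := T'.equivFinOfCardEq hcard with he
  set f : Fin N → Fin (2 + m * (N - 1)) := fun a => ↑(e.symm a) with hf
  have hf_inj : Function.Injective f := fun a b hab => by
    have := e.symm.injective (Subtype.ext hab)
    exact this
  have hf_memT : ∀ a, f a ∈ T := by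
    intro a
    exact hsub (e.symm a).2
  have hf_col : ∀ a, c s(v, f a) = j := by
    intro a
    have := hf_memT a
    rw [hT, Finset.mem_filter] at this
    exact this.2
  have hf_ne_v : ∀ a, f a ≠ v := by
    intro a
    have := hf_memT a
    rw [hT, Finset.mem_filter] at this
    exact Finset.ne_of_mem_erase this.1
  set c' : Sym2 (Fin N) → Fin m := fun p => c (p.map f) with hc'
  obtain ⟨A', hA'mono, hA'sum⟩ := h c'
  have himg_mono : ∀ i, MonoClique c i ((A' i).image f) := by
    intro i a ha b hb hab
    obtain ⟨x, hx, rfl⟩ := Finset.mem_image.mp ha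
    obtain ⟨y, hy, rfl⟩ := Finset.mem_image.mp hb
    have hxy : x ≠ y := fun hxy => hab (by rw [hxy])
    have := hA'mono i x hx y hy hxy
    simpa [hc', Sym2.map_pair_eq] using this
  refine ⟨fun i => if i = j then insert v ((A' i).image f) else (A' i).image f, ?_, ?_⟩
  · intro i a ha b hb hab
    dsimp only at ha hb
    by_cases hij : i = j
    · rw [if_pos hij, Finset.mem_insert] at ha hb
      subst hij
      rcases ha with rfl | ha
      · rcases hb with rfl | hb
        · exact absurd rfl hab
        · obtain ⟨x, hx, rfl⟩ := Finset.mem_image.mp hb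
          exact hf_col x
      · rcases hb with rfl | hb
        · obtain ⟨x, hx, rfl⟩ := Finset.mem_image.mp ha
          rw [Sym2.eq_swap]
          exact hf_col x
        · exact himg_mono _ a ha b hb hab
    · rw [if_neg hij] at ha hb
      exact himg_mono i a ha b hb hab
  · have hcards : ∀ i : Fin m,
        (if i = j then insert v ((A' i).image f) else (A' i).image f).card
          = (A' i).card + (if i = j then 1 else 0) := by
      intro i
      by_cases hij : i = j
      · have hvnot : v ∉ (A' i).image f := by
          intro hmem
          obtain ⟨x, hx, hxv⟩ := Finset.mem_image.mp hmem
          exact hf_ne_v x hxv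
        rw [if_pos hij, if_pos hij, Finset.card_insert_of_notMem hvnot,
          Finset.card_image_of_injective _ hf_inj]
      · rw [if_neg hij, if_neg hij, Finset.card_image_of_injective _ hf_inj, Nat.add_zero]
    rw [Finset.sum_congr rfl (fun i _ => hcards i), Finset.sum_add_distrib,
      Finset.sum_ite_eq' Finset.univ j (fun _ => 1), if_pos (Finset.mem_univ j)]
    omega
end

section
/- For every natural number k and m ≥ 2, R'_m(m+k) ≤ 1 + (m^k - 1)/(m - 1): every m-edge-coloured complete graph on 1 + (m^k-1)/(m-1) vertices contains monochromatic cliques A_1,...,A_m, one of each colour, with |A_1| + ... + |A_m| ≥ m + k. -/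
lemma Rprime_key (m : ℕ) (hm : 2 ≤ m) (k : ℕ) :
    ∀ (V : Type) [DecidableEq V] (c : Sym2 V → Fin m) (s : Finset V),
      1 + (m ^ k - 1) / (m - 1) ≤ s.card →
      ∃ A : Fin m → Finset V, (∀ i, A i ⊆ s) ∧ (∀ i, MonoClique c i (A i)) ∧
        m + k ≤ ∑ i, (A i).card := by
  induction k with
  | zero =>
    intro V _ c s hs
    have h0 : (m ^ 0 - 1) / (m - 1) = 0 := by simp
    have hpos : 0 < s.card := by omega
    obtain ⟨v, hv⟩ := Finset.card_pos.mp hpos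
    refine ⟨fun _ => {v}, fun i => by simp [hv], fun i a ha b hb hab => ?_, ?_⟩
    · simp only [Finset.mem_singleton] at ha hb
      subst ha; subst hb; exact absurd rfl hab
    · simp
  | succ k ih =>
    intro V _ c s hs
    -- arithmetic: (m^(k+1)-1)/(m-1) = m*q + 1 where q = (m^k-1)/(m-1)
    obtain ⟨q, hq⟩ : (m - 1) ∣ m ^ k - 1 := by
      simpa using Nat.sub_dvd_pow_sub_pow m 1 k
    have hSk : (m ^ k - 1) / (m - 1) = q := by
      rw [hq]; exact Nat.mul_div_cancel_left _ (by omega)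
    have hpow : 1 ≤ m ^ k := Nat.one_le_pow _ _ (by omega)
    have hSk1 : (m ^ (k + 1) - 1) / (m - 1) = m * q + 1 := by
      have h3 : m ^ k = (m - 1) * q + 1 := by omega
      have h2 : m ^ (k + 1) - 1 = (m - 1) * (m * q + 1) := by
        have h4 : m ^ (k + 1) = m * m ^ k := by ring
        rw [h4, h3]
        have h5 : m * ((m - 1) * q + 1) = (m - 1) * (m * q + 1) + 1 := by
          obtain ⟨n, rfl⟩ : ∃ n, m = n + 2 := ⟨m - 2, by omega⟩
          have hn : n + 2 - 1 = n + 1 := by omega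
          rw [hn]; ring
        omega
      rw [h2]; exact Nat.mul_div_cancel_left _ (by omega)
    rw [hSk1] at hs
    obtain ⟨Q, hQ⟩ : ∃ Q, m * q = Q := ⟨_, rfl⟩
    rw [hQ] at hs
    -- pick a vertex v
    obtain ⟨v, hv⟩ := Finset.card_pos.mp (show 0 < s.card by omega)
    have htcard : Q + 1 ≤ (s.erase v).card := by
      have := Finset.card_erase_of_mem hv
      omega
    -- pigeonhole: some colour class of the neighbourhood of v is big
    have hfib : (s.erase v).card
        = ∑ i : Fin m, ((s.erase v).filter fun w => c s(v, w) = i).card :=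
      Finset.card_eq_sum_card_fiberwise (fun x _ => Finset.mem_univ (c s(v, x)))
    obtain ⟨i, hi⟩ :
        ∃ i : Fin m, q + 1 ≤ ((s.erase v).filter fun w => c s(v, w) = i).card := by
      by_contra hcon
      push_neg at hcon
      have hle : ∑ i : Fin m, ((s.erase v).filter fun w => c s(v, w) = i).card ≤ Q := by
        calc ∑ i : Fin m, ((s.erase v).filter fun w => c s(v, w) = i).card
            ≤ ∑ _i : Fin m, q := Finset.sum_le_sum fun j _ => by have := hcon j; omega
          _ = Q := by rw [Finset.sum_const, Finset.card_univ, Fintype.card_fin,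
                smul_eq_mul, ← hQ]
      omega
    set u := (s.erase v).filter fun w => c s(v, w) = i with hu
    obtain ⟨A, hAsub, hAmono, hAcard⟩ := ih V c u (by omega)
    have husub : u ⊆ s := fun x hx =>
      Finset.mem_of_mem_erase (Finset.mem_of_mem_filter _ hx)
    have hvu : v ∉ u := fun h => (Finset.notMem_erase v s) (Finset.mem_of_mem_filter _ h)
    have hvA : v ∉ A i := fun h => hvu (hAsub i h)
    have hedge : ∀ w ∈ A i, c s(v, w) = i := fun w hw =>
      (Finset.mem_filter.mp (hAsub i hw)).2
    refine ⟨Function.update A i (insert v (A i)), ?_, ?_, ?_⟩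
    · intro j
      by_cases hji : j = i
      · subst hji
        rw [Function.update_self]
        intro x hx
        rcases Finset.mem_insert.mp hx with rfl | hx
        · exact hv
        · exact husub (hAsub j hx)
      · rw [Function.update_of_ne hji]
        exact fun x hx => husub (hAsub j hx)
    · intro j
      by_cases hji : j = i
      · subst hji
        rw [Function.update_self]
        intro a ha b hb hab
        rcases Finset.mem_insert.mp ha with ha' | ha'
        · rcases Finset.mem_insert.mp hb with hb' | hb'
          · exact absurd (ha'.trans hb'.symm) hab
          · rw [ha']; exact hedge b hb'
        · rcases Finset.mem_insert.mp hb with hb' | hb'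
          · rw [hb', Sym2.eq_swap]; exact hedge a ha'
          · exact hAmono j a ha' b hb' hab
      · rw [Function.update_of_ne hji]
        exact hAmono j
    · have e1 := Finset.sum_erase_add Finset.univ (fun j => (A j).card) (Finset.mem_univ i)
      have e2 := Finset.sum_erase_add Finset.univ
        (fun j => (Function.update A i (insert v (A i)) j).card) (Finset.mem_univ i)
      beta_reduce at e1 e2
      have e3 : ∑ j ∈ Finset.univ.erase i,
          (Function.update A i (insert v (A i)) j).card
          = ∑ j ∈ Finset.univ.erase i, (A j).card :=
        Finset.sum_congr rfl fun j hj => by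
          rw [Function.update_of_ne (Finset.ne_of_mem_erase hj)]
      have e4 : (Function.update A i (insert v (A i)) i).card = (A i).card + 1 := by
        rw [Function.update_self]; exact Finset.card_insert_of_notMem hvA
      rw [e3, e4] at e2
      omega

/-- `R'_m(m+k) ≤ 1 + (m^k - 1)/(m-1)` for `m ≥ 2`: every `m`-edge-coloured complete
graph on `1 + (m^k - 1)/(m-1)` vertices contains monochromatic cliques, one of each
colour, of total size at least `m + k`. -/
theorem Rprime_multicolour_bound (m : ℕ) (hm : 2 ≤ m) (k : ℕ)
    (c : Sym2 (Fin (1 + (m ^ k - 1) / (m - 1))) → Fin m) :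
    ∃ A : Fin m → Finset (Fin (1 + (m ^ k - 1) / (m - 1))),
      (∀ i, MonoClique c i (A i)) ∧ m + k ≤ ∑ i, (A i).card := by
  obtain ⟨A, _, hmono, hcard⟩ := Rprime_key m hm k _ c Finset.univ (by simp)
  exact ⟨A, hmono, hcard⟩
end
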